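/- Let A be a separable C*-algebra, B a C*-algebra, and φ = (φ_t)_{t∈[1,∞)} : A → B an asymptotic homomorphism. Then there exists a nondecreasing sequence 1 ≤ t_1 ≤ t_2 ≤ t_3 ≤ ⋯ in [1,∞) with lim_{i→∞} t_i = ∞ such that for every a ∈ A, lim_{i→∞} sup_{t ∈ [t_i, t_{i+1}]} ‖φ_t(a) − φ_{t_i}(a)‖ = 0. -/

import Mathlib

open Filter Set

/-- An asymptotic homomorphism from `A` to `B`: a family `φ = (φ_t)_{t ∈ [1,∞)}` of maps
`A → B` such that `t ↦ φ_t(a)` is continuous on `[1,∞)` for every `a`, and which is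
asymptotically star-preserving, linear and multiplicative as `t → ∞`. -/
def IsAsymptoticHom {A B : Type*} [NonUnitalNormedRing A] [StarRing A] [Module ℂ A]
    [NonUnitalNormedRing B] [StarRing B] [Module ℂ B] (φ : ℝ → A → B) : Prop :=
  (∀ a : A, ContinuousOn (fun t => φ t a) (Ici 1)) ∧
  (∀ a : A, Tendsto (fun t => ‖φ t (star a) - star (φ t a)‖) atTop (nhds 0)) ∧
  (∀ (a b : A) (c : ℂ),
    Tendsto (fun t => ‖φ t (c • a + b) - c • φ t a - φ t b‖) atTop (nhds 0)) ∧
  (∀ a b : A, Tendsto (fun t => ‖φ t (a * b) - φ t a * φ t b‖) atTop (nhds 0))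

section Pert
variable {U : Type*} [CStarAlgebra U] [Nontrivial U] [PartialOrder U] [StarOrderedRing U]

lemma my_alg_nonneg {c : ℝ} (hc : 0 ≤ c) : (0:U) ≤ algebraMap ℝ U c := by
  have h := star_mul_self_nonneg (algebraMap ℝ U (Real.sqrt c))
  have hsa : star (algebraMap ℝ U (Real.sqrt c)) = algebraMap ℝ U (Real.sqrt c) := by
    exact ((IsSelfAdjoint.all (Real.sqrt c)).algebraMap U).star_eq
  rw [hsa, ← map_mul, Real.mul_self_sqrt hc] at h
  exact h

lemma my_inv_bound {S : U} (hle : algebraMap ℝ U (1/2 : ℝ) ≤ S) :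
    ∃ S' : Uˣ, ((S' : U) = S) ∧ ‖((S'⁻¹ : Uˣ) : U)‖ ≤ 2 := by
  have h0 : (0:U) ≤ algebraMap ℝ U (1/2 : ℝ) := my_alg_nonneg (by norm_num)
  let a : Uˣ :=
    { val := algebraMap ℝ U (1/2 : ℝ)
      inv := algebraMap ℝ U (2 : ℝ)
      val_inv := by rw [← map_mul]; norm_num
      inv_val := by rw [← map_mul]; norm_num }
  have hS : IsUnit S := CStarAlgebra.isUnit_of_le (a : U) hle (Units.isStrictlyPositive_iff.mpr h0)
  refine ⟨hS.unit, rfl, ?_⟩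
  have hab : (a : U) ≤ (hS.unit : U) := by simpa [a] using hle
  have hinv : ((hS.unit⁻¹ : Uˣ) : U) ≤ ((a⁻¹ : Uˣ) : U) :=
    CStarAlgebra.inv_le_inv (by simpa [a] using h0) hab
  have hnn : (0:U) ≤ ((hS.unit⁻¹ : Uˣ) : U) :=
    CFC.inv_nonneg_of_nonneg hS.unit (by simpa using h0.trans hab)
  have := CStarAlgebra.norm_le_norm_of_nonneg_of_le hnn hinv
  calc ‖((hS.unit⁻¹ : Uˣ) : U)‖ ≤ ‖((a⁻¹ : Uˣ) : U)‖ := this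
    _ = ‖algebraMap ℝ U (2:ℝ)‖ := rfl
    _ ≤ 2 := by
        rw [norm_algebraMap']
        norm_num

lemma my_X_unit (X G₁ G₂ : U) (h1 : star X * X = G₁) (h2 : X * star X = G₂)
    (hG1 : algebraMap ℝ U (1/2 : ℝ) ≤ G₁) (hG2 : algebraMap ℝ U (1/2 : ℝ) ≤ G₂) :
    ∃ Xu : Uˣ, ((Xu : U) = X) ∧ ‖((Xu⁻¹ : Uˣ) : U)‖ * ‖((Xu⁻¹ : Uˣ) : U)‖ ≤ 2 := by
  obtain ⟨u1, hu1, hu1n⟩ := my_inv_bound hG1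
  obtain ⟨u2, hu2, hu2n⟩ := my_inv_bound hG2
  have hl : (((u1⁻¹ : Uˣ) : U) * star X) * X = 1 := by
    rw [mul_assoc, h1, ← hu1, Units.inv_mul]
  have hr : X * (star X * ((u2⁻¹ : Uˣ) : U)) = 1 := by
    rw [← mul_assoc, h2, ← hu2, Units.mul_inv]
  have hlr : ((u1⁻¹ : Uˣ) : U) * star X = star X * ((u2⁻¹ : Uˣ) : U) := by
    calc ((u1⁻¹ : Uˣ) : U) * star X
        = (((u1⁻¹ : Uˣ) : U) * star X) * (X * (star X * ((u2⁻¹ : Uˣ) : U))) := by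
          rw [hr, mul_one]
      _ = ((((u1⁻¹ : Uˣ) : U) * star X) * X) * (star X * ((u2⁻¹ : Uˣ) : U)) := by
          simp only [mul_assoc]
      _ = star X * ((u2⁻¹ : Uˣ) : U) := by rw [hl, one_mul]
  refine ⟨⟨X, star X * ((u2⁻¹ : Uˣ) : U), hr, by rw [← hlr]; exact hl⟩, rfl, ?_⟩
  set Xu : Uˣ := ⟨X, star X * ((u2⁻¹ : Uˣ) : U), hr, by rw [← hlr]; exact hl⟩ with hXu
  set x := ((Xu⁻¹ : Uˣ) : U) with hx
  have hXx : X * x = 1 := Xu.mul_inv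
  have hxX : x * X = 1 := Xu.inv_mul
  have hinv : ((u1⁻¹ : Uˣ) : U) = x * star x := by
    apply Units.inv_eq_of_mul_eq_one_right
    rw [hu1, ← h1]
    calc star X * X * (x * star x) = star X * (X * x) * star x := by
          rw [mul_assoc, mul_assoc, mul_assoc]
      _ = star X * star x := by rw [hXx, mul_one]
      _ = star (x * X) := by rw [star_mul]
      _ = 1 := by rw [hxX, star_one]
  calc ‖x‖ * ‖x‖ = ‖x * star x‖ := (CStarRing.norm_self_mul_star).symm
    _ = ‖((u1⁻¹ : Uˣ) : U)‖ := by rw [hinv]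
    _ ≤ 2 := hu1n

lemma my_pos_pert {P T : U} (hP : 0 ≤ P) (hTsa : IsSelfAdjoint T) (hTn : ‖T‖ ≤ 1/2) :
    algebraMap ℝ U (1/2 : ℝ) ≤ 1 + P + T := by
  have h1 : -(algebraMap ℝ U ‖T‖) ≤ T := hTsa.neg_algebraMap_norm_le_self
  rw [← sub_nonneg]
  have hsplit : 1 + P + T - algebraMap ℝ U (1/2 : ℝ)
      = P + (T - -(algebraMap ℝ U ‖T‖)) + algebraMap ℝ U ((1:ℝ) - ‖T‖ - 1/2) := by
    rw [map_sub, map_sub, map_one]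
    abel
  rw [hsplit]
  exact add_nonneg (add_nonneg hP (sub_nonneg.mpr h1)) (my_alg_nonneg (by linarith))

lemma my_key_bound (z w V γ : U) (hrel : z * (1 + w) = w + γ)
    (hw : ‖w - V * V‖ ≤ 1/8) (hγ : ‖γ‖ ≤ 1/4) (hV : ‖star V - V‖ ≤ 1/2) :
    ‖z‖ ≤ 5 := by
  set p := Complex.I • V with hp
  set q := Complex.I • star V with hq
  have hqp : q * p = -(star V * V) := by
    rw [hq, hp, smul_mul_smul_comm, Complex.I_mul_I, neg_one_smul]
  have hpq : p * q = -(V * star V) := by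
    rw [hq, hp, smul_mul_smul_comm, Complex.I_mul_I, neg_one_smul]
  have hpp : p * p = -(V * V) := by
    rw [hp, smul_mul_smul_comm, Complex.I_mul_I, neg_one_smul]
  set X := 1 - p with hX
  set Y := 1 + p with hY
  have hsX : star X = 1 + q := by
    rw [hX, star_sub, star_one, hp, star_smul, Complex.star_def, Complex.conj_I, neg_smul, hq,
      sub_neg_eq_add]
  have hsY : star Y = 1 - q := by
    rw [hY, star_add, star_one, hp, star_smul, Complex.star_def, Complex.conj_I, neg_smul, hq,
      ← sub_eq_add_neg]
  have hT1 : IsSelfAdjoint (q - p) := by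
    rw [IsSelfAdjoint, star_sub, hp, hq, star_smul, star_smul, Complex.star_def, Complex.conj_I,
      star_star, neg_smul, neg_smul, sub_neg_eq_add, add_comm, ← sub_eq_add_neg]
  have hT2 : IsSelfAdjoint (p - q) := by simpa using hT1.neg
  have hT1n : ‖q - p‖ ≤ 1/2 := by
    rw [hq, hp, ← smul_sub, norm_smul, Complex.norm_I, one_mul]
    exact hV
  have hT2n : ‖p - q‖ ≤ 1/2 := by rwa [norm_sub_rev] at hT1n
  -- the four positivity bounds
  have hG1 : star X * X = 1 + star V * V + (q - p) := by
    rw [hsX, hX]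
    have : (1 + q) * (1 - p) = 1 - p + q - q * p := by noncomm_ring
    rw [this, hqp]
    abel
  have hG2 : X * star X = 1 + V * star V + (q - p) := by
    rw [hsX, hX]
    have : (1 - p) * (1 + q) = 1 + q - p - p * q := by noncomm_ring
    rw [this, hpq]
    abel
  have hG3 : star Y * Y = 1 + star V * V + (p - q) := by
    rw [hsY, hY]
    have : (1 - q) * (1 + p) = 1 + p - q - q * p := by noncomm_ring
    rw [this, hqp]
    abel
  have hG4 : Y * star Y = 1 + V * star V + (p - q) := by
    rw [hsY, hY]
    have : (1 + p) * (1 - q) = 1 - q + p - p * q := by noncomm_ring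
    rw [this, hpq]
    abel
  have hYX : Y * X = 1 + V * V := by
    rw [hY, hX]
    have : (1 + p) * (1 - p) = 1 - p * p + (p - p) := by noncomm_ring
    rw [this, hpp]
    abel
  obtain ⟨Xu, hXuv, hXn⟩ := my_X_unit X _ _ rfl rfl
    (hG1 ▸ my_pos_pert (star_mul_self_nonneg V) hT1 hT1n)
    (hG2 ▸ my_pos_pert (mul_star_self_nonneg V) hT1 hT1n)
  obtain ⟨Yu, hYuv, hYn⟩ := my_X_unit Y _ _ rfl rfl
    (hG3 ▸ my_pos_pert (star_mul_self_nonneg V) hT2 hT2n)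
    (hG4 ▸ my_pos_pert (mul_star_self_nonneg V) hT2 hT2n)
  set Q := (((Yu * Xu)⁻¹ : Uˣ) : U) with hQ
  have hQn : ‖Q‖ ≤ 2 := by
    have hQeq : Q = ((Xu⁻¹ : Uˣ) : U) * ((Yu⁻¹ : Uˣ) : U) := by
      rw [hQ, mul_inv_rev, Units.val_mul]
    have h := norm_mul_le ((Xu⁻¹ : Uˣ) : U) ((Yu⁻¹ : Uˣ) : U)
    rw [← hQeq] at h
    nlinarith [norm_nonneg ((Xu⁻¹ : Uˣ) : U), norm_nonneg ((Yu⁻¹ : Uˣ) : U), norm_nonneg Q]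
  have hPval : ((Yu * Xu : Uˣ) : U) = 1 + V * V := by
    rw [Units.val_mul, hXuv, hYuv, hYX]
  have h5 : z * ((Yu * Xu : Uˣ) : U) = V * V + ((w - V * V) + γ + z * (V * V - w)) := by
    rw [hPval]
    calc z * (1 + V * V) = z * (1 + w) + z * (V * V - w) := by noncomm_ring
      _ = w + γ + z * (V * V - w) := by rw [hrel]
      _ = V * V + ((w - V * V) + γ + z * (V * V - w)) := by abel
  have hzeq : z = (V * V) * Q + ((w - V * V) + γ + z * (V * V - w)) * Q := by
    have h6 : z = (V * V + ((w - V * V) + γ + z * (V * V - w))) * Q := by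
      rw [hQ, ← h5]
      exact (Units.mul_inv_cancel_right z _).symm
    rw [add_mul] at h6
    exact h6
  have hVVQ : (V * V) * Q = 1 - Q := by
    have hQinv : ((Yu * Xu : Uˣ) : U) * Q = 1 := Units.mul_inv _
    have : (V * V : U) = ((Yu * Xu : Uˣ) : U) - 1 := by rw [hPval]; abel
    rw [this, sub_mul, one_mul, hQinv]
  have hnorm1 : ‖(1 : U) - Q‖ ≤ 3 := by
    calc ‖(1:U) - Q‖ ≤ ‖(1:U)‖ + ‖Q‖ := norm_sub_le _ _
      _ ≤ 1 + 2 := by rw [norm_one]; linarith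
      _ = 3 := by norm_num
  have hinner : ‖(w - V * V) + γ + z * (V * V - w)‖ ≤ 3/8 + ‖z‖ * (1/8) := by
    have h1 : ‖z * (V * V - w)‖ ≤ ‖z‖ * (1/8) := by
      calc ‖z * (V * V - w)‖ ≤ ‖z‖ * ‖V * V - w‖ := norm_mul_le _ _
        _ ≤ ‖z‖ * (1/8) := by
            rw [norm_sub_rev] at hw
            exact mul_le_mul_of_nonneg_left hw (norm_nonneg z)
    calc ‖(w - V * V) + γ + z * (V * V - w)‖
        ≤ ‖(w - V * V) + γ‖ + ‖z * (V * V - w)‖ := norm_add_le _ _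
      _ ≤ (‖w - V * V‖ + ‖γ‖) + ‖z‖ * (1/8) := by
          have := norm_add_le (w - V * V) γ
          linarith
      _ ≤ 3/8 + ‖z‖ * (1/8) := by linarith
  have : ‖z‖ ≤ 3 + (3/8 + ‖z‖ * (1/8)) * 2 := by
    calc ‖z‖ = ‖(1 - Q) + ((w - V * V) + γ + z * (V * V - w)) * Q‖ := by
          rw [← hVVQ, ← hzeq]
      _ ≤ ‖(1:U) - Q‖ + ‖((w - V * V) + γ + z * (V * V - w)) * Q‖ := norm_add_le _ _
      _ ≤ 3 + ‖(w - V * V) + γ + z * (V * V - w)‖ * ‖Q‖ := by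
          have := norm_mul_le ((w - V * V) + γ + z * (V * V - w)) Q
          linarith
      _ ≤ 3 + (3/8 + ‖z‖ * (1/8)) * 2 := by
          have hin := hinner
          have h0 : (0:ℝ) ≤ ‖(w - V * V) + γ + z * (V * V - w)‖ := norm_nonneg _
          nlinarith [norm_nonneg Q]
  linarith

end Pert

section Main
variable {A B : Type*} [NonUnitalCStarAlgebra A] [NonUnitalCStarAlgebra B]

lemma my_qspec_subset (b : A) :
    quasispectrum ℝ (star b * b) ⊆ Icc 0 ‖star b * b‖ := by
  letI := CStarAlgebra.spectralOrder (Unitization ℂ A)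
  haveI := CStarAlgebra.spectralOrderedRing (Unitization ℂ A)
  intro x hx
  rw [Unitization.quasispectrum_eq_spectrum_inr' ℝ ℂ] at hx
  have hcoe : ((star b * b : A) : Unitization ℂ A)
      = star (b : Unitization ℂ A) * (b : Unitization ℂ A) := by
    rw [Unitization.inr_mul, Unitization.inr_star]
  constructor
  · refine spectrum_nonneg_of_nonneg ?_ hx
    rw [hcoe]
    exact star_mul_self_nonneg _
  · have h := spectrum.norm_le_norm_of_mem hx
    rw [Unitization.norm_inr] at h
    calc x ≤ |x| := le_abs_self x
      _ ≤ ‖star b * b‖ := by simpa [Real.norm_eq_abs] using h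

lemma my_uv {b : A} (hb : ‖b‖ < 1) :
    ∃ u v : A, star v = v ∧ v * v = u ∧ (star b * b) * u = u - star b * b := by
  have hsa : IsSelfAdjoint (star b * b) := IsSelfAdjoint.star_mul_self b
  set a := star b * b with ha
  set r := ‖a‖ with hr
  have hr0 : 0 ≤ r := norm_nonneg a
  have hr1 : r < 1 := by
    rw [hr, ha, CStarRing.norm_star_mul_self]
    nlinarith [norm_nonneg b]
  set m : ℝ → ℝ := fun x => max 0 (min x r) with hm
  have hm_cont : Continuous m := continuous_const.max (continuous_id.min continuous_const)
  have hm0 : ∀ x, 0 ≤ m x := fun x => le_max_left _ _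
  have hmr : ∀ x, m x ≤ r := fun x => max_le hr0 (min_le_right _ _)
  set f : ℝ → ℝ := fun x => m x / (1 - m x) with hf
  have hden : ∀ x, 0 < 1 - m x := fun x => by have := hmr x; linarith
  have hf_cont : Continuous f := hm_cont.div (continuous_const.sub hm_cont)
    (fun x => (hden x).ne')
  have hm_zero : m 0 = 0 := by
    simp [hm, min_eq_left hr0]
  have hf0 : f 0 = 0 := by simp [hf, hm_zero]
  have hf_nonneg : ∀ x, 0 ≤ f x := fun x => div_nonneg (hm0 x) (hden x).le
  set g : ℝ → ℝ := fun x => Real.sqrt (f x) with hg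
  have hg_cont : Continuous g := Real.continuous_sqrt.comp hf_cont
  have hg0 : g 0 = 0 := by simp [hg, hf0]
  refine ⟨cfcₙ f a, cfcₙ g a, ?_, ?_, ?_⟩
  · exact (cfcₙ_predicate g a).star_eq
  · have hgg : (fun x => g x * g x) = f := funext fun x => Real.mul_self_sqrt (hf_nonneg x)
    rw [← cfcₙ_mul g g a hg_cont.continuousOn hg0 hg_cont.continuousOn hg0, hgg]
  · have hsub := my_qspec_subset b
    have hmx : ∀ x ∈ quasispectrum ℝ a, m x = x := by
      intro x hx
      obtain ⟨h0x, hxr⟩ := hsub hx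
      rw [hm]
      simp [min_eq_left (show x ≤ r from hxr), max_eq_right h0x]
    calc a * cfcₙ f a = cfcₙ (fun x : ℝ => x) a * cfcₙ f a := by rw [cfcₙ_id' ℝ a hsa]
      _ = cfcₙ (fun x => x * f x) a := by
          rw [← cfcₙ_mul (fun x : ℝ => x) f a continuous_id.continuousOn rfl
            hf_cont.continuousOn hf0]
      _ = cfcₙ (fun x => f x - x) a := by
          refine cfcₙ_congr fun x hx => ?_
          obtain ⟨h0x, hxr⟩ := hsub hx
          have h1x : (1:ℝ) - x > 0 := by linarith [lt_of_le_of_lt hxr hr1]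
          have hmx' := hmx x hx
          simp only [hf, hmx']
          field_simp
          ring
      _ = cfcₙ f a - cfcₙ (fun x : ℝ => x) a := by
          rw [cfcₙ_sub f (fun x : ℝ => x) a hf_cont.continuousOn hf0
            continuous_id.continuousOn rfl]
      _ = cfcₙ f a - a := by rw [cfcₙ_id' ℝ a hsa]

lemma my_bound5 (φ : ℝ → A → B) (hφ : IsAsymptoticHom φ) {b : A} (hb : ‖b‖ < 1) :
    ∀ᶠ s in atTop, ‖φ s (star b * b)‖ ≤ 5 := by
  obtain ⟨hc, hstar, hlin, hmul⟩ := hφ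
  obtain ⟨u, v, hvs, hvv, hau⟩ := my_uv hb
  set a := star b * b with ha
  have E1 : ∀ᶠ s in atTop, ‖φ s (a * u) - φ s a * φ s u‖ < 1/8 :=
    (hmul a u).eventually_lt_const (by norm_num)
  have harg : ∀ s, φ s ((-1:ℂ) • a + u) - (-1:ℂ) • φ s a - φ s u
      = φ s (u - a) + φ s a - φ s u := by
    intro s
    have h1 : ((-1:ℂ) • a + u) = u - a := by rw [neg_one_smul]; abel
    rw [h1, neg_one_smul]
    abel
  have E2 : ∀ᶠ s in atTop, ‖φ s (u - a) + φ s a - φ s u‖ < 1/8 := by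
    refine (Filter.Tendsto.congr (fun s => congrArg norm (harg s)) (hlin a u (-1))).eventually_lt_const (by norm_num)
  have E3 : ∀ᶠ s in atTop, ‖φ s u - φ s v * φ s v‖ < 1/8 := by
    have := hmul v v
    rw [hvv] at this
    exact this.eventually_lt_const (by norm_num)
  have E4 : ∀ᶠ s in atTop, ‖φ s v - star (φ s v)‖ < 1/2 := by
    have := hstar v
    rw [show star v = v from hvs] at this
    exact this.eventually_lt_const (by norm_num)
  filter_upwards [E1, E2, E3, E4] with s h1 h2 h3 h4
  letI := CStarAlgebra.spectralOrder (Unitization ℂ B)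
  haveI := CStarAlgebra.spectralOrderedRing (Unitization ℂ B)
  set z := φ s a with hz
  set w' := φ s u with hw'
  set V := φ s v with hV
  set γ : B := z * w' - w' + z with hγdef
  have hγn : ‖γ‖ ≤ 1/4 := by
    have hsplit : γ = (z * w' - φ s (a * u)) + (φ s (u - a) + z - w') := by
      rw [hγdef, hau]
      abel
    calc ‖γ‖ = ‖(z * w' - φ s (a * u)) + (φ s (u - a) + z - w')‖ := by rw [hsplit]
      _ ≤ ‖z * w' - φ s (a * u)‖ + ‖φ s (u - a) + z - w'‖ := norm_add_le _ _
      _ ≤ 1/8 + 1/8 := by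
          have h1' : ‖z * w' - φ s (a * u)‖ < 1/8 := by rwa [norm_sub_rev] at h1
          exact add_le_add h1'.le h2.le
      _ = 1/4 := by norm_num
  have hrel : (z : Unitization ℂ B) * (1 + (w' : Unitization ℂ B))
      = (w' : Unitization ℂ B) + (γ : Unitization ℂ B) := by
    rw [mul_add, mul_one, ← Unitization.inr_mul, ← Unitization.inr_add, ← Unitization.inr_add]
    congr 1
    rw [hγdef]
    abel
  have hkey := my_key_bound (U := Unitization ℂ B) (z : Unitization ℂ B)
    (w' : Unitization ℂ B) (V : Unitization ℂ B) (γ : Unitization ℂ B) hrel ?_ ?_ ?_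
  · rwa [Unitization.norm_inr] at hkey
  · rw [← Unitization.inr_mul, ← Unitization.inr_sub, Unitization.norm_inr]
    exact h3.le
  · rwa [Unitization.norm_inr]
  · rw [← Unitization.inr_star, ← Unitization.inr_sub, Unitization.norm_inr, norm_sub_rev]
    exact h4.le

lemma my_bound3 (φ : ℝ → A → B) (hφ : IsAsymptoticHom φ) {b : A} (hb : ‖b‖ < 1) :
    ∀ᶠ s in atTop, ‖φ s b‖ ≤ 3 := by
  have E5 := my_bound5 φ hφ hb
  have E6 : ∀ᶠ s in atTop, ‖φ s (star b * b) - φ s (star b) * φ s b‖ < 1 :=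
    (hφ.2.2.2 (star b) b).eventually_lt_const (by norm_num)
  have E7 : ∀ᶠ s in atTop, ‖φ s (star b) - star (φ s b)‖ < 1 :=
    (hφ.2.1 b).eventually_lt_const (by norm_num)
  filter_upwards [E5, E6, E7] with s h5 h6 h7
  set x := φ s b with hx
  have hsq : ‖x‖ * ‖x‖ = ‖star x * x‖ := (CStarRing.norm_star_mul_self).symm
  have hd1 : ‖star x * x - φ s (star b) * x‖ ≤ ‖x‖ := by
    calc ‖star x * x - φ s (star b) * x‖ = ‖(star x - φ s (star b)) * x‖ := by rw [sub_mul]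
      _ ≤ ‖star x - φ s (star b)‖ * ‖x‖ := norm_mul_le _ _
      _ ≤ 1 * ‖x‖ := by
          rw [norm_sub_rev] at h7
          exact mul_le_mul_of_nonneg_right h7.le (norm_nonneg x)
      _ = ‖x‖ := one_mul _
  have hval : ‖star x * x‖ ≤ ‖φ s (star b) * x‖ + ‖x‖ := by
    calc ‖star x * x‖ = ‖φ s (star b) * x + (star x * x - φ s (star b) * x)‖ := by
          congr 1; abel
      _ ≤ ‖φ s (star b) * x‖ + ‖star x * x - φ s (star b) * x‖ := norm_add_le _ _
      _ ≤ ‖φ s (star b) * x‖ + ‖x‖ := by linarith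
  have hval2 : ‖φ s (star b) * x‖ ≤ 6 := by
    calc ‖φ s (star b) * x‖ = ‖φ s (star b * b) + (φ s (star b) * x - φ s (star b * b))‖ := by
          congr 1; abel
      _ ≤ ‖φ s (star b * b)‖ + ‖φ s (star b) * x - φ s (star b * b)‖ := norm_add_le _ _
      _ ≤ 5 + 1 := by
          rw [norm_sub_rev] at h6
          exact add_le_add h5 h6.le
      _ = 6 := by norm_num
  nlinarith [norm_nonneg x]

lemma my_zero (φ : ℝ → A → B) (hφ : IsAsymptoticHom φ) :
    Tendsto (fun s => ‖φ s (0 : A)‖) atTop (nhds 0) := by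
  have := hφ.2.2.1 0 0 1
  refine Filter.Tendsto.congr (fun s => ?_) this
  simp

lemma my_small (φ : ℝ → A → B) (hφ : IsAsymptoticHom φ) {ε : ℝ} (hε : 0 < ε) {b : A}
    (hb : ‖b‖ ≤ ε / 8) : ∀ᶠ s in atTop, ‖φ s b‖ ≤ ε := by
  set c : ℂ := ((5 / ε : ℝ) : ℂ) with hc
  have hcb : ‖c • b‖ < 1 := by
    rw [norm_smul, hc]
    have : ‖((5 / ε : ℝ) : ℂ)‖ = 5 / ε := by
      rw [Complex.norm_real, Real.norm_eq_abs, abs_of_pos (by positivity)]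
    rw [this]
    calc 5 / ε * ‖b‖ ≤ 5 / ε * (ε / 8) := by
          exact mul_le_mul_of_nonneg_left hb (by positivity)
      _ = 5 / 8 := by field_simp
      _ < 1 := by norm_num
  have E1 := my_bound3 φ hφ hcb
  have E2 : ∀ᶠ s in atTop, ‖φ s (c • b + 0) - c • φ s b - φ s 0‖ < 1/2 :=
    (hφ.2.2.1 b 0 c).eventually_lt_const (by norm_num)
  have E3 : ∀ᶠ s in atTop, ‖φ s (0:A)‖ < 1/2 :=
    (my_zero φ hφ).eventually_lt_const (by norm_num)
  filter_upwards [E1, E2, E3] with s h1 h2 h3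
  have hcsmul : ‖c • φ s b‖ ≤ 4 := by
    calc ‖c • φ s b‖ = ‖φ s (c • b + 0) - (φ s (c • b + 0) - c • φ s b - φ s 0) - φ s 0‖ := by
          congr 1; abel
      _ ≤ ‖φ s (c • b + 0)‖ + ‖φ s (c • b + 0) - c • φ s b - φ s 0‖ + ‖φ s (0:A)‖ := by
          refine (norm_sub_le _ _).trans ?_
          gcongr
          exact norm_sub_le _ _
      _ ≤ 3 + 1/2 + 1/2 := by
          rw [add_zero] at h2 ⊢
          exact add_le_add (add_le_add h1 h2.le) h3.le
      _ = 4 := by norm_num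
  have hnc : ‖c‖ = 5 / ε := by
    rw [hc, Complex.norm_real, Real.norm_eq_abs, abs_of_pos (by positivity)]
  rw [norm_smul, hnc] at hcsmul
  have hne : ε ≠ 0 := hε.ne'
  have h4 : 5 * ‖φ s b‖ ≤ 4 * ε := by
    have hmul := mul_le_mul_of_nonneg_right hcsmul hε.le
    calc 5 * ‖φ s b‖ = 5 / ε * ‖φ s b‖ * ε := by field_simp
      _ ≤ 4 * ε := hmul
  linarith

lemma my_approx (φ : ℝ → A → B) (hφ : IsAsymptoticHom φ) {ε : ℝ} (hε : 0 < ε) {a d : A}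
    (hd : ‖a - d‖ ≤ ε / 16) : ∀ᶠ s in atTop, ‖φ s a - φ s d‖ ≤ ε := by
  have E1 : ∀ᶠ s in atTop, ‖φ s (a - d)‖ ≤ ε / 2 :=
    my_small φ hφ (by positivity) (by linarith)
  have E2 : ∀ᶠ s in atTop, ‖φ s ((1:ℂ) • (a - d) + d) - (1:ℂ) • φ s (a - d) - φ s d‖ < ε / 4 :=
    (hφ.2.2.1 (a - d) d 1).eventually_lt_const (by positivity)
  filter_upwards [E1, E2] with s h1 h2
  have harg : (1:ℂ) • (a - d) + d = a := by rw [one_smul]; abel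
  rw [harg, one_smul] at h2
  calc ‖φ s a - φ s d‖ = ‖(φ s a - φ s (a - d) - φ s d) + φ s (a - d)‖ := by congr 1; abel
    _ ≤ ‖φ s a - φ s (a - d) - φ s d‖ + ‖φ s (a - d)‖ := norm_add_le _ _
    _ ≤ ε / 4 + ε / 2 := add_le_add h2.le h1
    _ ≤ ε := by linarith

end Main

/-- Every asymptotic homomorphism `φ : A → B` with `A` separable admits a
discretization: a nondecreasing sequence `1 ≤ t₁ ≤ t₂ ≤ ⋯` tending to `∞` such that for every
`a ∈ A`, `lim_{i→∞} sup_{t ∈ [t_i, t_{i+1}]} ‖φ_t(a) - φ_{t_i}(a)‖ = 0`. -/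
theorem stmt_3 {A B : Type*} [NonUnitalCStarAlgebra A] [TopologicalSpace.SeparableSpace A]
    [NonUnitalCStarAlgebra B] (φ : ℝ → A → B) (hφ : IsAsymptoticHom φ) :
    ∃ t : ℕ → ℝ, (∀ i, 1 ≤ t i) ∧ Monotone t ∧ Tendsto t atTop atTop ∧
      ∀ a : A,
        Tendsto (fun i => sSup ((fun s => ‖φ s a - φ (t i) a‖) '' Icc (t i) (t (i + 1))))
          atTop (nhds 0) := by
  haveI : Nonempty A := ⟨0⟩
  obtain ⟨d, hd⟩ := TopologicalSpace.exists_dense_seq A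
  have hδj : ∀ j n : ℕ, ∃ δ : ℝ, 0 < δ ∧ ∀ s ∈ Icc (1:ℝ) (2*n+5), ∀ s' ∈ Icc (1:ℝ) (2*n+5),
      |s - s'| ≤ δ → ‖φ s (d j) - φ s' (d j)‖ ≤ 1/((n:ℝ)+1) := by
    intro j n
    have hcomp : IsCompact (Icc (1:ℝ) (2*n+5)) := isCompact_Icc
    have hcont : ContinuousOn (fun s => φ s (d j)) (Icc (1:ℝ) (2*n+5)) :=
      (hφ.1 (d j)).mono (fun x hx => hx.1)
    have huc := hcomp.uniformContinuousOn_of_continuous hcont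
    rw [Metric.uniformContinuousOn_iff] at huc
    obtain ⟨δ, hδ0, hδ⟩ := huc (1/((n:ℝ)+1)) (by positivity)
    refine ⟨δ/2, by positivity, fun s hs s' hs' hss => ?_⟩
    have h := hδ s hs s' hs' (by rw [Real.dist_eq]; linarith)
    rw [dist_eq_norm] at h
    exact h.le
  choose δ0 hδ0pos hδ0 using hδj
  set δ : ℕ → ℝ := fun n => min 1 ((Finset.range (n+1)).inf' Finset.nonempty_range_add_one
    (fun j => δ0 j n)) with hδdef
  have hδpos : ∀ n, 0 < δ n := by
    intro n
    refine lt_min one_pos ?_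
    rw [Finset.lt_inf'_iff]
    exact fun j _ => hδ0pos j n
  have hδ1 : ∀ n, δ n ≤ 1 := fun n => min_le_left _ _
  have hδprop : ∀ n : ℕ, ∀ j : ℕ, j ≤ n → ∀ s ∈ Icc (1:ℝ) (2*(n:ℝ)+5),
      ∀ s' ∈ Icc (1:ℝ) (2*(n:ℝ)+5),
      |s - s'| ≤ δ n → ‖φ s (d j) - φ s' (d j)‖ ≤ 1/((n:ℝ)+1) := by
    intro n j hj s hs s' hs' hss
    refine hδ0 j n s hs s' hs' (hss.trans ?_)
    exact (min_le_right _ _).trans (Finset.inf'_le _ (Finset.mem_range.mpr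
      (Nat.lt_succ_of_le hj)))
  set k : ℕ → ℕ := fun n => ⌈(δ n)⁻¹⌉₊ with hkdef
  have hk1 : ∀ n, 1 ≤ k n := fun n => Nat.one_le_ceil_iff.mpr (inv_pos.mpr (hδpos n))
  have hkδ1 : ∀ n, 1 ≤ (k n : ℝ) * δ n := by
    intro n
    have h1 : (δ n)⁻¹ ≤ (k n : ℝ) := Nat.le_ceil _
    have h2 := mul_le_mul_of_nonneg_right h1 (hδpos n).le
    rwa [inv_mul_cancel₀ (hδpos n).ne'] at h2
  have hkδ2 : ∀ n, (k n : ℝ) * δ n ≤ 2 := by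
    intro n
    have h1 : (k n : ℝ) < (δ n)⁻¹ + 1 := Nat.ceil_lt_add_one (inv_pos.mpr (hδpos n)).le
    have h2 := mul_le_mul_of_nonneg_right h1.le (hδpos n).le
    rw [add_mul, inv_mul_cancel₀ (hδpos n).ne', one_mul] at h2
    linarith [hδ1 n]
  set S : ℕ → ℕ := fun n => ∑ m ∈ Finset.range n, k m with hSdef
  have hSsucc : ∀ n, S (n+1) = S n + k n := fun n => Finset.sum_range_succ _ _
  have hSmono : StrictMono S := strictMono_nat_of_lt_succ (fun n => by
    rw [hSsucc]
    have := hk1 n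
    omega)
  have hS0 : S 0 = 0 := rfl
  set N : ℕ → ℕ := fun i => Nat.findGreatest (fun n => S n ≤ i) i with hNdef
  have hNS : ∀ i, S (N i) ≤ i := fun i =>
    Nat.findGreatest_spec (P := fun n => S n ≤ i) (Nat.zero_le i) (by simp [hS0])
  have hNlt : ∀ i, i < S (N i + 1) := by
    intro i
    by_contra h
    push_neg at h
    have h2 : N i + 1 ≤ i := le_trans hSmono.le_apply h
    have h3 : N i + 1 ≤ N i := Nat.le_findGreatest (P := fun n => S n ≤ i) h2 h
    omega
  have hNblock : ∀ n i, S n ≤ i → i < S (n+1) → N i = n := by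
    intro n i h1 h2
    have hge : n ≤ N i := Nat.le_findGreatest (P := fun m => S m ≤ i) (le_trans hSmono.le_apply h1) h1
    have hle : N i ≤ n := by
      by_contra h
      push_neg at h
      have h4 : S (n+1) ≤ S (N i) := hSmono.monotone h
      have := hNS i
      omega
    omega
  have hNmono : Monotone N := by
    intro i i' hii
    exact Nat.le_findGreatest (P := fun n => S n ≤ i') (le_trans (Nat.findGreatest_le i) hii) ((hNS i).trans hii)
  have hNtend : Tendsto N atTop atTop := by
    refine tendsto_atTop_atTop_of_monotone hNmono ?_
    intro b
    exact ⟨S b, (hNblock b (S b) le_rfl (hSmono (Nat.lt_succ_self b))).ge⟩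
  set t : ℕ → ℝ := fun i => 1 + ∑ l ∈ Finset.range i, δ (N l) with htdef
  have ht1 : ∀ i, 1 ≤ t i := by
    intro i
    have h0 : 0 ≤ ∑ l ∈ Finset.range i, δ (N l) :=
      Finset.sum_nonneg fun l _ => (hδpos (N l)).le
    rw [htdef]
    simpa using h0
  have htsucc : ∀ i, t (i+1) = t i + δ (N i) := by
    intro i
    rw [htdef]
    simp only [Finset.sum_range_succ]
    ring
  have htmono : Monotone t := monotone_nat_of_le_succ fun i => by
    rw [htsucc]
    linarith [hδpos (N i)]
  have htS : ∀ n, t (S n) = 1 + ∑ m ∈ Finset.range n, (k m : ℝ) * δ m := by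
    intro n
    induction n with
    | zero => simp [htdef, hS0]
    | succ n ih =>
      have hsplit : ∑ l ∈ Finset.range (S (n+1)), δ (N l)
          = ∑ l ∈ Finset.range (S n), δ (N l) + ∑ l ∈ Finset.Ico (S n) (S (n+1)), δ (N l) := by
        have h := Finset.sum_Ico_consecutive (fun l => δ (N l)) (Nat.zero_le (S n))
          (hSmono (Nat.lt_succ_self n)).le
        simp only [Finset.range_eq_Ico]
        exact h.symm
      have hconst : ∑ l ∈ Finset.Ico (S n) (S (n+1)), δ (N l) = (k n : ℝ) * δ n := by
        have hcongr : ∀ l ∈ Finset.Ico (S n) (S (n+1)), δ (N l) = δ n := by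
          intro l hl
          rw [Finset.mem_Ico] at hl
          rw [hNblock n l hl.1 hl.2]
        rw [Finset.sum_congr rfl hcongr, Finset.sum_const, Nat.card_Ico, hSsucc,
          Nat.add_sub_cancel_left, nsmul_eq_mul]
      have ih' : ∑ l ∈ Finset.range (S n), δ (N l)
          = ∑ m ∈ Finset.range n, (k m : ℝ) * δ m := by
        have := ih
        rw [htdef] at this
        simp only at this
        linarith
      rw [htdef]
      simp only
      rw [hsplit, ih', Finset.sum_range_succ, hconst]
  have htSlow : ∀ n : ℕ, 1 + (n:ℝ) ≤ t (S n) := by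
    intro n
    rw [htS]
    have hsum : (n : ℝ) ≤ ∑ m ∈ Finset.range n, (k m : ℝ) * δ m := by
      calc (n:ℝ) = ∑ _m ∈ Finset.range n, (1:ℝ) := by simp
        _ ≤ _ := Finset.sum_le_sum fun m _ => hkδ1 m
    linarith
  have httop : Tendsto t atTop atTop := by
    refine tendsto_atTop_atTop_of_monotone htmono ?_
    intro b
    obtain ⟨n, hn⟩ := exists_nat_ge b
    refine ⟨S n, le_trans ?_ (htSlow n)⟩
    linarith
  have htup : ∀ i, t (i+1) ≤ 2 * (N i : ℝ) + 3 := by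
    intro i
    have h1 : i + 1 ≤ S (N i + 1) := hNlt i
    have h2 : t (i+1) ≤ t (S (N i + 1)) := htmono h1
    have h3 := htS (N i + 1)
    have h4 : ∑ m ∈ Finset.range (N i + 1), (k m : ℝ) * δ m ≤ 2 * ((N i : ℝ) + 1) := by
      calc ∑ m ∈ Finset.range (N i + 1), (k m : ℝ) * δ m
          ≤ ∑ _m ∈ Finset.range (N i + 1), (2:ℝ) := Finset.sum_le_sum fun m _ => hkδ2 m
        _ = 2 * ((N i : ℝ) + 1) := by
            rw [Finset.sum_const, Finset.card_range]
            push_cast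
            ring
    rw [h3] at h2
    linarith
  have hosc : ∀ j i, j ≤ N i → ∀ s ∈ Icc (t i) (t (i+1)),
      ‖φ s (d j) - φ (t i) (d j)‖ ≤ 1/((N i : ℝ) + 1) := by
    intro j i hj s hs
    have hti1 : t i ≤ t (i+1) := htmono (Nat.le_succ i)
    have hicc : s ∈ Icc (1:ℝ) (2*(N i : ℝ)+5) :=
      ⟨(ht1 i).trans hs.1, hs.2.trans (by linarith [htup i])⟩
    have hticc : t i ∈ Icc (1:ℝ) (2*(N i : ℝ)+5) := ⟨ht1 i, by linarith [htup i]⟩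
    refine hδprop (N i) j hj s hicc (t i) hticc ?_
    rw [abs_le]
    constructor
    · linarith [hs.1, hδpos (N i)]
    · linarith [hs.2, htsucc i]
  refine ⟨t, ht1, htmono, httop, ?_⟩
  intro a
  rw [Metric.tendsto_atTop]
  intro ε hε
  obtain ⟨j, hj⟩ : ∃ j, ‖a - d j‖ ≤ ε / 100 := by
    obtain ⟨j, hjd⟩ := hd.exists_dist_lt a (show 0 < ε/100 by positivity)
    exact ⟨j, by rw [← dist_eq_norm]; exact hjd.le⟩
  have happrox : ∀ᶠ s in atTop, ‖φ s a - φ s (d j)‖ ≤ ε / 6 :=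
    my_approx φ hφ (by positivity) (hj.trans (by linarith))
  obtain ⟨T, hT⟩ := eventually_atTop.mp happrox
  obtain ⟨n₀, hn₀⟩ := exists_nat_gt (6/ε)
  have hev : ∀ᶠ i in atTop, (T ≤ t i ∧ j ≤ N i ∧ n₀ ≤ N i) := by
    filter_upwards [httop.eventually_ge_atTop T, hNtend.eventually_ge_atTop j,
      hNtend.eventually_ge_atTop n₀] with i h1 h2 h3
    exact ⟨h1, h2, h3⟩
  obtain ⟨I, hI⟩ := eventually_atTop.mp hev
  refine ⟨I, fun i hi => ?_⟩
  obtain ⟨h1, h2, h3⟩ := hI i hi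
  have hti1 : t i ≤ t (i+1) := htmono (Nat.le_succ i)
  have hNi1 : (0:ℝ) < (N i : ℝ) + 1 := by positivity
  have hfrac : 1/((N i : ℝ)+1) ≤ ε/6 := by
    have hcast : (n₀ : ℝ) ≤ (N i : ℝ) := by exact_mod_cast h3
    have h6 : 6/ε < (N i : ℝ) + 1 := by linarith
    have h7 : 6 < ((N i : ℝ) + 1) * ε := (div_lt_iff₀ hε).mp h6
    rw [div_le_div_iff₀ hNi1 (by norm_num : (0:ℝ) < 6)]
    nlinarith
  have hptwise : ∀ x ∈ (fun s => ‖φ s a - φ (t i) a‖) '' Icc (t i) (t (i+1)), x ≤ ε/2 := by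
    rintro x ⟨s, hs, rfl⟩
    have hsT : T ≤ s := h1.trans hs.1
    have htiT : T ≤ t i := h1
    have e1 : ‖φ s a - φ s (d j)‖ ≤ ε/6 := hT s hsT
    have e2 : ‖φ s (d j) - φ (t i) (d j)‖ ≤ 1/((N i : ℝ)+1) := hosc j i h2 s hs
    have e3 : ‖φ (t i) (d j) - φ (t i) a‖ ≤ ε/6 := by
      rw [norm_sub_rev]
      exact hT (t i) htiT
    calc ‖φ s a - φ (t i) a‖
        = ‖(φ s a - φ s (d j)) + (φ s (d j) - φ (t i) (d j)) + (φ (t i) (d j) - φ (t i) a)‖ := by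
          congr 1
          abel
      _ ≤ ‖φ s a - φ s (d j)‖ + ‖φ s (d j) - φ (t i) (d j)‖ + ‖φ (t i) (d j) - φ (t i) a‖ := by
          refine (norm_add_le _ _).trans ?_
          gcongr
          exact norm_add_le _ _
      _ ≤ ε/6 + 1/((N i : ℝ)+1) + ε/6 := by
          exact add_le_add (add_le_add e1 e2) e3
      _ ≤ ε/2 := by linarith
  have hmem0 : (0:ℝ) ∈ (fun s => ‖φ s a - φ (t i) a‖) '' Icc (t i) (t (i+1)) :=
    ⟨t i, ⟨le_rfl, hti1⟩, by simp⟩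
  have hbdd : BddAbove ((fun s => ‖φ s a - φ (t i) a‖) '' Icc (t i) (t (i+1))) :=
    ⟨ε/2, fun x hx => hptwise x hx⟩
  have hsup_le : sSup ((fun s => ‖φ s a - φ (t i) a‖) '' Icc (t i) (t (i+1))) ≤ ε/2 :=
    Real.sSup_le hptwise (by positivity)
  have hsup_ge : (0:ℝ) ≤ sSup ((fun s => ‖φ s a - φ (t i) a‖) '' Icc (t i) (t (i+1))) :=
    le_csSup hbdd hmem0
  rw [Real.dist_eq, sub_zero, abs_of_nonneg hsup_ge]
  linarith
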